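/- The function f_δ is the Fenchel–Legendre conjugate of the indicator function of the convex set B_δ = {(a,b,c) ∈ ℝ × ℝ^d × ℝ : a + (|b|² + c²/δ²)/2 ≤ 0}. That is, for all (x,y,z) ∈ ℝ × ℝ^d × ℝ, sup over (a,b,c) ∈ B_δ of (ax + ⟨b,y⟩ + cz) equals f_δ(x,y,z). -/

import Mathlib

open ENNReal Classical

/-- The function `f_δ` from the paper, defined on `ℝ × ℝ^d × ℝ` with values in `[0,+∞]`. -/
noncomputable def fdelta (δ : ℝ) (d : ℕ) (p : ℝ × EuclideanSpace ℝ (Fin d) × ℝ) : ℝ≥0∞ :=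
  if 0 < p.1 then ENNReal.ofReal ((‖p.2.1‖ ^ 2 + δ ^ 2 * p.2.2 ^ 2) / (2 * p.1))
  else if p = 0 then 0 else ⊤

/-- The convex set `B_δ = {(a,b,c) : a + (|b|² + c²/δ²)/2 ≤ 0}`. -/
def Bdelta (δ : ℝ) (d : ℕ) : Set (ℝ × EuclideanSpace ℝ (Fin d) × ℝ) :=
  {q | q.1 + (1 / 2) * (‖q.2.1‖ ^ 2 + q.2.2 ^ 2 / δ ^ 2) ≤ 0}

/-- `f_δ` is the Fenchel–Legendre conjugate of the indicator of `B_δ`: the supremum over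
`(a,b,c) ∈ B_δ` of `a·x + ⟨b,y⟩ + c·z` (taken in the extended reals) equals `f_δ(x,y,z)`. -/
theorem fdelta_conjugate (δ : ℝ) (hδ : 0 < δ) (d : ℕ)
    (x : ℝ) (y : EuclideanSpace ℝ (Fin d)) (z : ℝ) :
    (⨆ q ∈ Bdelta δ d, ENNReal.ofReal (q.1 * x + (inner ℝ q.2.1 y : ℝ) + q.2.2 * z)) =
      fdelta δ d (x, y, z) := by
  have hδ2 : (0:ℝ) < δ ^ 2 := by positivity
  by_cases hx : 0 < x
  · have hfd : fdelta δ d (x, y, z)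
        = ENNReal.ofReal ((‖y‖ ^ 2 + δ ^ 2 * z ^ 2) / (2 * x)) := by
      simp [fdelta, hx]
    rw [hfd]
    apply le_antisymm
    · apply iSup₂_le
      rintro ⟨a, b, c⟩ hq
      apply ENNReal.ofReal_le_ofReal
      simp only [Bdelta, Set.mem_setOf_eq] at hq
      have hby : (inner ℝ b y : ℝ) ≤ ‖b‖ * ‖y‖ := real_inner_le_norm b y
      have hd : c ^ 2 / δ ^ 2 * δ ^ 2 = c ^ 2 := div_mul_cancel₀ _ (ne_of_gt hδ2)
      have hq' : 2 * a * δ ^ 2 + ‖b‖ ^ 2 * δ ^ 2 + c ^ 2 ≤ 0 := by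
        have h := mul_le_mul_of_nonneg_right hq (le_of_lt hδ2)
        nlinarith [h, hd]
      rw [le_div_iff₀ (by positivity : (0:ℝ) < 2 * x)]
      have h1 : x ^ 2 * (2 * a * δ ^ 2 + ‖b‖ ^ 2 * δ ^ 2 + c ^ 2) ≤ 0 :=
        mul_nonpos_of_nonneg_of_nonpos (sq_nonneg x) hq'
      have h4 : 2 * x * δ ^ 2 * (inner ℝ b y : ℝ) ≤ 2 * x * δ ^ 2 * (‖b‖ * ‖y‖) :=
        mul_le_mul_of_nonneg_left hby (by positivity)
      nlinarith [h1, h4, sq_nonneg (δ ^ 2 * z - x * c),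
        mul_nonneg (le_of_lt hδ2) (sq_nonneg (‖y‖ - x * ‖b‖)), hδ2, hx]
    · set b₀ : EuclideanSpace ℝ (Fin d) := (1 / x) • y with hb₀
      have hnb : ‖b₀‖ ^ 2 = ‖y‖ ^ 2 / x ^ 2 := by
        rw [hb₀, norm_smul, Real.norm_eq_abs, abs_of_pos (by positivity : (0:ℝ) < 1 / x)]
        field_simp
      set c₀ : ℝ := δ ^ 2 * z / x with hc₀
      set a₀ : ℝ := -(1 / 2) * (‖b₀‖ ^ 2 + c₀ ^ 2 / δ ^ 2) with ha₀
      have hmem : (a₀, b₀, c₀) ∈ Bdelta δ d := by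
        simp only [Bdelta, Set.mem_setOf_eq, ha₀]
        ring_nf
        exact le_refl _
      have hib : (inner ℝ b₀ y : ℝ) = ‖y‖ ^ 2 / x := by
        rw [hb₀, real_inner_smul_left, real_inner_self_eq_norm_sq]
        ring
      have hval : a₀ * x + (inner ℝ b₀ y : ℝ) + c₀ * z
          = (‖y‖ ^ 2 + δ ^ 2 * z ^ 2) / (2 * x) := by
        rw [hib, ha₀, hnb, hc₀]
        field_simp
        ring
      exact le_iSup₂_of_le (a₀, b₀, c₀) hmem (le_of_eq (by rw [hval]))
  · by_cases hx0 : x = 0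
    · subst hx0
      by_cases hyz : y = 0 ∧ z = 0
      · obtain ⟨hy, hz⟩ := hyz
        subst hy; subst hz
        have hfd : fdelta δ d ((0:ℝ), (0:EuclideanSpace ℝ (Fin d)), (0:ℝ)) = 0 := by
          simp [fdelta, Prod.ext_iff]
        rw [hfd]
        apply le_antisymm
        · apply iSup₂_le
          rintro ⟨a, b, c⟩ _
          simp
        · exact zero_le
      · have hfd : fdelta δ d ((0:ℝ), y, z) = ⊤ := by
          have hne : ¬((0:ℝ), y, z) = 0 := by
            simp only [Prod.ext_iff]
            intro h
            exact hyz ⟨h.2.1, h.2.2⟩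
          simp [fdelta, hne]
        rw [hfd]
        apply ENNReal.eq_top_of_forall_nnreal_le
        intro r
        have hspos : 0 < ‖y‖ ^ 2 + δ ^ 2 * z ^ 2 := by
          rcases not_and_or.mp hyz with hy | hz
          · have h1 : 0 < ‖y‖ := norm_pos_iff.mpr hy
            nlinarith [mul_nonneg hδ2.le (sq_nonneg z)]
          · have h1 : 0 < z ^ 2 := by positivity
            nlinarith [sq_nonneg ‖y‖, mul_pos hδ2 h1]
        set s : ℝ := ‖y‖ ^ 2 + δ ^ 2 * z ^ 2 with hs
        set t : ℝ := r / s with htdef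
        set b₁ : EuclideanSpace ℝ (Fin d) := t • y with hb₁
        set c₁ : ℝ := t * δ ^ 2 * z with hc₁
        set a₁ : ℝ := -(1 / 2) * (‖b₁‖ ^ 2 + c₁ ^ 2 / δ ^ 2) with ha₁
        have hmem : (a₁, b₁, c₁) ∈ Bdelta δ d := by
          simp only [Bdelta, Set.mem_setOf_eq, ha₁]
          ring_nf
          exact le_refl _
        have hib : (inner ℝ b₁ y : ℝ) = t * ‖y‖ ^ 2 := by
          rw [hb₁, real_inner_smul_left, real_inner_self_eq_norm_sq]
        have hval : a₁ * 0 + (inner ℝ b₁ y : ℝ) + c₁ * z = r := by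
          rw [hib, hc₁, htdef]
          field_simp
          ring
        refine le_trans (le_of_eq (ENNReal.ofReal_coe_nnreal).symm) ?_
        exact le_iSup₂_of_le (a₁, b₁, c₁) hmem
          (le_of_eq (congrArg ENNReal.ofReal hval.symm))
    · have hxneg : x < 0 := lt_of_le_of_ne (not_lt.mp hx) hx0
      have hfd : fdelta δ d (x, y, z) = ⊤ := by
        have hne : ¬(x, y, z) = (0 : ℝ × EuclideanSpace ℝ (Fin d) × ℝ) := by
          simp only [Prod.ext_iff]
          intro h
          exact hx0 h.1
        simp [fdelta, hx, hne]
      rw [hfd]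
      apply ENNReal.eq_top_of_forall_nnreal_le
      intro r
      have hmem : ((r / x : ℝ), (0 : EuclideanSpace ℝ (Fin d)), (0:ℝ)) ∈ Bdelta δ d := by
        simp only [Bdelta, Set.mem_setOf_eq, norm_zero]
        have : (r:ℝ) / x ≤ 0 := div_nonpos_of_nonneg_of_nonpos r.coe_nonneg hxneg.le
        simp
        linarith
      have hval : ((r:ℝ) / x) * x + (inner ℝ (0 : EuclideanSpace ℝ (Fin d)) y : ℝ) + 0 * z
          = r := by
        rw [inner_zero_left, div_mul_cancel₀ _ hx0]
        ring
      refine le_trans (le_of_eq (ENNReal.ofReal_coe_nnreal).symm) ?_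
      exact le_iSup₂_of_le ((r / x : ℝ), (0 : EuclideanSpace ℝ (Fin d)), (0:ℝ)) hmem
        (le_of_eq (congrArg ENNReal.ofReal hval.symm))
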